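/- (Correctness of the relaxed formula with cardinality constraint used by the msu3 algorithm.) Let C : Fin m → Clause be a CNF formula and let k ≤ m. Then the following are equivalent: (a) there exist an assignment α : V → Bool and blocking values b : Fin m → Bool such that |{ i : Fin m | b i = true }| = k and for every i either α satisfies C i or b i = true; (b) MaxSat(C) ≥ m − k. -/

import Mathlib

attribute [local instance] Classical.propDecidable

/-- A clause is a finite set of literals; a literal is a pair (variable, polarity). -/
abbrev Clause (V : Type*) := Finset (V × Bool)

/-- An assignment satisfies a clause iff it satisfies at least one of its literals. -/
def SatClause {V : Type*} (α : V → Bool) (ω : Clause V) : Prop :=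
  ∃ l ∈ ω, α l.1 = l.2

/-- The number of clauses of the CNF formula `C` satisfied by the assignment `α`. -/
noncomputable def numSat {V : Type*} {m : ℕ} (C : Fin m → Clause V) (α : V → Bool) : ℕ :=
  (Finset.univ.filter (fun i => SatClause α (C i))).card

/-- `MaxSat(C)`: the maximum, over all assignments `α`, of the number of satisfied clauses. -/
noncomputable def maxSat {V : Type*} {m : ℕ} (C : Fin m → Clause V) : ℕ :=
  sSup { n | ∃ α : V → Bool, n = numSat C α }

/-- Correctness of the relaxed formula with cardinality constraint used by `msu3`: for `k ≤ m`,
the relaxed formula with exactly `k` true blocking variables is satisfiable iff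
`MaxSat(C) ≥ m - k`. -/
theorem stmt6 {V : Type*} {m k : ℕ} (C : Fin m → Clause V) (hk : k ≤ m) :
    (∃ (α : V → Bool) (b : Fin m → Bool),
        (Finset.univ.filter (fun i => b i = true)).card = k ∧
        ∀ i, SatClause α (C i) ∨ b i = true) ↔
      m - k ≤ maxSat C := by
  classical
  have hbdd : BddAbove { n | ∃ α : V → Bool, n = numSat C α } := by
    refine ⟨m, fun n hn => ?_⟩
    obtain ⟨α, rfl⟩ := hn
    have := Finset.card_filter_le (Finset.univ : Finset (Fin m)) (fun i => SatClause α (C i))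
    simpa [numSat] using this
  constructor
  · rintro ⟨α, b, hcard, hsat⟩
    have h1 : m - k ≤ numSat C α := by
      have hsub : (Finset.univ.filter (fun i => ¬ b i = true)) ⊆
          (Finset.univ.filter (fun i => SatClause α (C i))) := by
        intro i hi
        simp only [Finset.mem_filter, Finset.mem_univ, true_and] at hi ⊢
        rcases hsat i with h | h
        · exact h
        · exact absurd h hi
      have hle := Finset.card_le_card hsub
      have hcompl : (Finset.univ.filter (fun i => ¬ b i = true)).card = m - k := by
        rw [Finset.filter_not, Finset.card_sdiff_of_subset (Finset.filter_subset _ _), hcard,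
          Finset.card_univ, Fintype.card_fin]
      rw [hcompl] at hle
      exact hle
    exact h1.trans (le_csSup hbdd ⟨α, rfl⟩)
  · intro h
    have hne : { n | ∃ α : V → Bool, n = numSat C α }.Nonempty :=
      ⟨numSat C (fun _ => true), fun _ => true, rfl⟩
    have hmem := Nat.sSup_mem hne hbdd
    obtain ⟨α, hα⟩ := hmem
    refine ⟨α, ?_⟩
    set S := (Finset.univ.filter (fun i => ¬ SatClause α (C i))) with hS
    have hScard : S.card ≤ k := by
      have hSeq : S.card = m - numSat C α := by
        rw [hS, Finset.filter_not, Finset.card_sdiff_of_subset (Finset.filter_subset _ _),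
          Finset.card_univ, Fintype.card_fin, numSat]
      have hns : m - k ≤ numSat C α := by rw [← hα]; exact h
      have hnm : numSat C α ≤ m := by
        simpa [numSat] using Finset.card_filter_le (Finset.univ : Finset (Fin m)) _
      omega
    obtain ⟨T, hST, hTcard⟩ := Finset.exists_superset_card_eq hScard
      (by simpa using hk)
    refine ⟨fun i => if i ∈ T then true else false, ?_, ?_⟩
    · rw [← hTcard]
      congr 1
      ext i
      simp
    · intro i
      by_cases hi : SatClause α (C i)
      · exact Or.inl hi
      · right
        have : i ∈ S := by simp [hS, hi]
        simp [hST this]
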